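/- For every p ≥ 1 and every θ ∈ [0, π], the average of the p-th power of the angular misalignment g(α; θ) = 2 arcsin(sin α · sin(θ/2)) over α ∈ [0, π/2] satisfies (2/π) ∫₀^{π/2} g(α; θ)^p dα ≤ (1 − 2p/((p+1)π)) · θ^p. -/

import Mathlib

open Real Set

lemma arcsin_mul_le {t c : ℝ} (ht : t ∈ Set.Icc (0:ℝ) 1) (hc : c ∈ Set.Icc (0:ℝ) 1) :
    Real.arcsin (t * c) ≤ t * Real.arcsin c := by
  have hac0 : 0 ≤ arcsin c := Real.arcsin_nonneg.2 hc.1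
  have hac2 : arcsin c ≤ π / 2 := Real.arcsin_le_pi_div_two c
  have hmem : t * arcsin c ∈ Set.Icc (-(π/2)) (π/2) := by
    constructor
    · exact le_trans (by linarith [pi_pos]) (mul_nonneg ht.1 hac0)
    · exact le_trans (mul_le_of_le_one_left hac0 ht.2) hac2
  have htc : t * c ∈ Set.Icc (-1:ℝ) 1 := by
    constructor
    · exact le_trans (by norm_num) (mul_nonneg ht.1 hc.1)
    · exact mul_le_one₀ ht.2 hc.1 hc.2
  rw [Real.arcsin_le_iff_le_sin htc hmem]
  have hb : (0:ℝ) ≤ 1 - t := by linarith [ht.2]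
  have hab : t + (1 - t) = 1 := by ring
  have hconc := strictConcaveOn_sin_Icc.concaveOn.2 (x := arcsin c) (y := 0)
    ⟨hac0, by linarith [pi_pos]⟩ ⟨le_rfl, pi_pos.le⟩ ht.1 hb hab
  simp only [smul_eq_mul, mul_zero, Real.sin_zero, add_zero] at hconc
  calc t * c = t * Real.sin (arcsin c) := by rw [Real.sin_arcsin (by linarith [hc.1]) hc.2]
    _ ≤ Real.sin (t * arcsin c) := by linarith [hconc]

lemma sin_rpow_integral_le {p : ℝ} (hp : 1 ≤ p) :
    ∫ α in (0:ℝ)..(π/2), Real.sin α ^ p ≤ π/2 - p/(p+1) := by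
  have hp1 : (0:ℝ) < p + 1 := by linarith
  have hcont : Continuous fun α : ℝ => Real.sin α ^ p :=
    Real.continuous_sin.rpow_const fun x => Or.inr (by linarith)
  have hcont2 : Continuous fun α : ℝ => Real.sin α ^ p * Real.cos α :=
    hcont.mul Real.continuous_cos
  -- FTC : ∫ sin^p cos = 1/(p+1)
  have hderiv : ∀ x ∈ Set.uIcc (0:ℝ) (π/2),
      HasDerivAt (fun y => Real.sin y ^ (p+1) / (p+1)) (Real.sin x ^ p * Real.cos x) x := by
    intro x hx
    have h1 : HasDerivAt (fun y : ℝ => Real.sin y ^ (p+1))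
        ((p+1) * Real.sin x ^ (p+1-1) * Real.cos x) x := by
      have := (Real.hasDerivAt_rpow_const (x := Real.sin x) (p := p+1)
        (Or.inr (by linarith))).comp x (Real.hasDerivAt_sin x)
      simpa [Function.comp_def, mul_comm, mul_assoc, mul_left_comm] using this
    have h2 := h1.div_const (p+1)
    have : (p+1) * Real.sin x ^ (p+1-1) * Real.cos x / (p+1) = Real.sin x ^ p * Real.cos x := by
      rw [add_sub_cancel_right]
      field_simp
    rwa [this] at h2
  have hI2 : ∫ α in (0:ℝ)..(π/2), Real.sin α ^ p * Real.cos α = 1/(p+1) := by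
    rw [intervalIntegral.integral_eq_sub_of_hasDerivAt hderiv
      (hcont2.intervalIntegrable _ _)]
    rw [Real.sin_pi_div_two, Real.sin_zero, Real.one_rpow, Real.zero_rpow (by linarith)]
    ring
  -- pointwise : sin^p ≤ (1 - cos) + sin^p * cos on [0, π/2]
  have hmono : ∫ α in (0:ℝ)..(π/2), Real.sin α ^ p
      ≤ ∫ α in (0:ℝ)..(π/2), (1 - Real.cos α + Real.sin α ^ p * Real.cos α) := by
    apply intervalIntegral.integral_mono_on pi_div_two_pos.le
      (hcont.intervalIntegrable _ _)
      (((continuous_const.sub Real.continuous_cos).add hcont2).intervalIntegrable _ _)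
    intro x hx
    have hs0 : 0 ≤ Real.sin x := Real.sin_nonneg_of_nonneg_of_le_pi hx.1
      (by linarith [hx.2, pi_pos])
    have hs1 : Real.sin x ≤ 1 := Real.sin_le_one x
    have hsp : Real.sin x ^ p ≤ 1 := Real.rpow_le_one hs0 hs1 (by linarith)
    have hc1 : Real.cos x ≤ 1 := Real.cos_le_one x
    show Real.sin x ^ p ≤ 1 - Real.cos x + Real.sin x ^ p * Real.cos x
    nlinarith [Real.sin_nonneg_of_nonneg_of_le_pi hx.1 (by linarith [hx.2, pi_pos])]
  have hsplit : ∫ α in (0:ℝ)..(π/2), (1 - Real.cos α + Real.sin α ^ p * Real.cos α)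
      = (∫ α in (0:ℝ)..(π/2), (1 - Real.cos α)) + ∫ α in (0:ℝ)..(π/2), Real.sin α ^ p * Real.cos α := by
    exact intervalIntegral.integral_add
      ((continuous_const.sub Real.continuous_cos).intervalIntegrable _ _)
      (hcont2.intervalIntegrable _ _)
  have h1c : ∫ α in (0:ℝ)..(π/2), (1 - Real.cos α) = π/2 - 1 := by
    rw [intervalIntegral.integral_sub (intervalIntegrable_const)
      (Real.continuous_cos.intervalIntegrable _ _)]
    simp [integral_cos]
  rw [hsplit, h1c, hI2] at hmono
  have : π/2 - 1 + 1/(p+1) = π/2 - p/(p+1) := by field_simp; ring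
  linarith [hmono, this.ge, this.le]
/-- For every `p ≥ 1` and `θ ∈ [0, π]`, the average of the `p`-th power of the angular
misalignment `g(α; θ) = 2 arcsin(sin α · sin(θ/2))` over `α ∈ [0, π/2]` satisfies
`(2/π) ∫₀^{π/2} g(α; θ)^p dα ≤ (1 − 2p/((p+1)π)) θ^p`. -/
theorem misalignment_average_power_bound (p θ : ℝ) (hp : 1 ≤ p)
    (hθ : θ ∈ Set.Icc (0:ℝ) π) :
    (2 / π) * ∫ α in (0:ℝ)..(π / 2),
        (2 * Real.arcsin (Real.sin α * Real.sin (θ / 2))) ^ p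
      ≤ (1 - 2 * p / ((p + 1) * π)) * θ ^ p := by

  obtain ⟨hθ0, hθπ⟩ := hθ
  have hπ := pi_pos
  have hs : Real.sin (θ/2) ∈ Set.Icc (0:ℝ) 1 :=
    ⟨Real.sin_nonneg_of_nonneg_of_le_pi (by linarith) (by linarith),
     Real.sin_le_one _⟩
  have hcontg : Continuous fun α : ℝ =>
      (2 * Real.arcsin (Real.sin α * Real.sin (θ/2))) ^ p :=
    (continuous_const.mul (Real.continuous_arcsin.comp
      (Real.continuous_sin.mul continuous_const))).rpow_const fun x => Or.inr (by linarith)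
  have hcontsp : Continuous fun α : ℝ => Real.sin α ^ p :=
    Real.continuous_sin.rpow_const fun x => Or.inr (by linarith)
  -- pointwise bound
  have hpt : ∀ α ∈ Set.Icc (0:ℝ) (π/2),
      (2 * Real.arcsin (Real.sin α * Real.sin (θ/2))) ^ p ≤ θ ^ p * Real.sin α ^ p := by
    intro α hα
    have hsa : Real.sin α ∈ Set.Icc (0:ℝ) 1 :=
      ⟨Real.sin_nonneg_of_nonneg_of_le_pi hα.1 (by linarith [hα.2]), Real.sin_le_one _⟩
    have h1 : Real.arcsin (Real.sin α * Real.sin (θ/2)) ≤ Real.sin α * (θ/2) := by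
      have := arcsin_mul_le hsa hs
      rwa [Real.arcsin_sin (by linarith) (by linarith)] at this
    have h0 : 0 ≤ Real.arcsin (Real.sin α * Real.sin (θ/2)) :=
      Real.arcsin_nonneg.2 (mul_nonneg hsa.1 hs.1)
    have h2 : (2 * Real.arcsin (Real.sin α * Real.sin (θ/2))) ≤ θ * Real.sin α := by
      nlinarith
    calc (2 * Real.arcsin (Real.sin α * Real.sin (θ/2))) ^ p
        ≤ (θ * Real.sin α) ^ p := Real.rpow_le_rpow (by linarith) h2 (by linarith)
      _ = θ ^ p * Real.sin α ^ p := Real.mul_rpow hθ0 hsa.1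
  have hint : ∫ α in (0:ℝ)..(π/2), (2 * Real.arcsin (Real.sin α * Real.sin (θ/2))) ^ p
      ≤ θ ^ p * ∫ α in (0:ℝ)..(π/2), Real.sin α ^ p := by
    rw [← intervalIntegral.integral_const_mul]
    exact intervalIntegral.integral_mono_on pi_div_two_pos.le
      (hcontg.intervalIntegrable _ _)
      ((continuous_const.mul hcontsp).intervalIntegrable _ _) hpt
  have hsin := sin_rpow_integral_le hp
  have hθp : 0 ≤ θ ^ p := Real.rpow_nonneg hθ0 p
  have hkey : θ ^ p * ∫ α in (0:ℝ)..(π/2), Real.sin α ^ p ≤ θ ^ p * (π/2 - p/(p+1)) :=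
    mul_le_mul_of_nonneg_left hsin hθp
  have hfinal : (2/π) * (θ ^ p * (π/2 - p/(p+1))) = (1 - 2 * p / ((p + 1) * π)) * θ ^ p := by
    have hp1 : p + 1 ≠ 0 := by positivity
    field_simp
  calc (2 / π) * ∫ α in (0:ℝ)..(π / 2), (2 * Real.arcsin (Real.sin α * Real.sin (θ / 2))) ^ p
      ≤ (2 / π) * (θ ^ p * (π/2 - p/(p+1))) := by
        apply mul_le_mul_of_nonneg_left (le_trans hint hkey) (by positivity)
    _ = (1 - 2 * p / ((p + 1) * π)) * θ ^ p := hfinal
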